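/- Let A be a Hermitian n×n complex matrix, γ ≥ 0, and let ρ : ℝ → (n×n complex matrices) be differentiable with ρ(t) Hermitian for all t, satisfying the deterministic pure-measurement drift equation ρ'(t) = −γ·⁅⁅D(t), ρ(t)⁆, ρ(t)⁆, where D(t) := (A − tr(A ρ(t))·1)². Then the variance V(t) := tr(A² ρ(t)) − (tr(A ρ(t)))² is differentiable with V'(t) = −γ · tr((⁅D(t), ρ(t)⁆)ᴴ · ⁅D(t), ρ(t)⁆) ≤ 0; in particular V is nonincreasing, so the flow monotonically decreases the variance of the monitored observable A. -/

import Mathlib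

open Matrix
open scoped ComplexOrder

attribute [local instance] Matrix.normedAddCommGroup Matrix.normedSpace

private lemma trace_deriv {n : ℕ} (C : Matrix (Fin n) (Fin n) ℂ)
    (ρ : ℝ → Matrix (Fin n) (Fin n) ℂ)
    (ρ' : Matrix (Fin n) (Fin n) ℂ) (t : ℝ) (h : HasDerivAt ρ ρ' t) :
    HasDerivAt (fun t => (C * ρ t).trace) (C * ρ').trace t := by
  let L : Matrix (Fin n) (Fin n) ℂ →ₗ[ℝ] ℂ :=
    ((Matrix.traceLinearMap (Fin n) ℂ ℂ).comp (LinearMap.mulLeft ℂ C)).restrictScalars ℝ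
  have := (LinearMap.toContinuousLinearMap L).hasFDerivAt.comp_hasDerivAt t h
  exact this

theorem variance_nonincreasing
    (n : ℕ) (A : Matrix (Fin n) (Fin n) ℂ) (hA : Aᴴ = A)
    (γ : ℝ) (hγ : 0 ≤ γ)
    (ρ : ℝ → Matrix (Fin n) (Fin n) ℂ)
    (hherm : ∀ t, (ρ t)ᴴ = ρ t)
    (D : ℝ → Matrix (Fin n) (Fin n) ℂ)
    (hD : ∀ t, D t = (A - (A * ρ t).trace • (1 : Matrix (Fin n) (Fin n) ℂ)) ^ 2)
    (hρ' : ∀ t, HasDerivAt ρ (-(γ : ℂ) • ⁅⁅D t, ρ t⁆, ρ t⁆) t)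
    (V : ℝ → ℂ)
    (hV : ∀ t, V t = (A ^ 2 * ρ t).trace - ((A * ρ t).trace) ^ 2) :
    (∀ t, HasDerivAt V (-(γ : ℂ) * ((⁅D t, ρ t⁆)ᴴ * ⁅D t, ρ t⁆).trace) t) ∧
    (∀ t, -(γ : ℂ) * ((⁅D t, ρ t⁆)ᴴ * ⁅D t, ρ t⁆).trace ≤ 0) ∧
    (∀ s t : ℝ, s ≤ t → (V t).re ≤ (V s).re) := by
  -- basic facts at each time
  have hc : ∀ t, star ((A * ρ t).trace) = (A * ρ t).trace := by
    intro t
    calc star ((A * ρ t).trace) = ((A * ρ t)ᴴ).trace := (Matrix.trace_conjTranspose _).symm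
    _ = ((ρ t) * A).trace := by rw [Matrix.conjTranspose_mul, hA, hherm]
    _ = (A * ρ t).trace := Matrix.trace_mul_comm _ _
  have hDh : ∀ t, (D t)ᴴ = D t := by
    intro t
    rw [hD]
    have hB : (A - (A * ρ t).trace • (1 : Matrix (Fin n) (Fin n) ℂ))ᴴ
        = A - (A * ρ t).trace • 1 := by
      rw [Matrix.conjTranspose_sub, hA, Matrix.conjTranspose_smul, Matrix.conjTranspose_one, hc]
    rw [pow_two, Matrix.conjTranspose_mul, hB, ← pow_two]
  have hMh : ∀ t, (⁅D t, ρ t⁆)ᴴ = -⁅D t, ρ t⁆ := by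
    intro t
    simp only [Ring.lie_def, Matrix.conjTranspose_sub, Matrix.conjTranspose_mul, hDh, hherm]
    abel
  -- key algebraic identity
  have key : ∀ t, (A ^ 2 * ⁅⁅D t, ρ t⁆, ρ t⁆).trace
      - 2 * (A * ρ t).trace * (A * ⁅⁅D t, ρ t⁆, ρ t⁆).trace
      = ((⁅D t, ρ t⁆)ᴴ * ⁅D t, ρ t⁆).trace := by
    intro t
    set c := (A * ρ t).trace with hcdef
    set p := ρ t with hpdef
    set d := D t with hddef
    set M := ⁅d, p⁆ with hMdef
    have hX : ⁅M, p⁆ = M * p - p * M := rfl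
    have htrX : (⁅M, p⁆).trace = 0 := by
      rw [hX, Matrix.trace_sub, Matrix.trace_mul_comm, sub_self]
    have hd2 : d = A * A - (2 * c) • A + (c * c) • 1 := by
      rw [hddef, hD, pow_two]
      simp only [Matrix.sub_mul, Matrix.mul_sub, smul_mul_assoc, mul_smul_comm,
        Matrix.one_mul, Matrix.mul_one, smul_smul, smul_sub, sub_smul, add_smul, two_mul]
      abel
    have h1 : (d * ⁅M, p⁆).trace = -(M * M).trace := by
      have e : d * ⁅M, p⁆ = (d * M) * p - d * (p * M) := by rw [hX, mul_sub, mul_assoc]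
      rw [e, Matrix.trace_sub, Matrix.trace_mul_comm (d * M) p, ← Matrix.trace_sub,
        show p * (d * M) - d * (p * M) = (p * d - d * p) * M from by
          rw [sub_mul, mul_assoc, mul_assoc],
        show p * d - d * p = -M from by rw [hMdef]; simp [Ring.lie_def],
        Matrix.neg_mul, Matrix.trace_neg]
    have h2 : (d * ⁅M, p⁆).trace
        = (A ^ 2 * ⁅M, p⁆).trace - 2 * c * (A * ⁅M, p⁆).trace := by
      rw [hd2, Matrix.add_mul, Matrix.sub_mul, Matrix.smul_mul, Matrix.smul_mul,
        Matrix.one_mul, Matrix.trace_add, Matrix.trace_sub, Matrix.trace_smul,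
        Matrix.trace_smul, htrX, smul_zero, add_zero, smul_eq_mul, pow_two]
    have hMM : (Mᴴ * M).trace = -(M * M).trace := by
      rw [hMh t, Matrix.neg_mul, Matrix.trace_neg]
    rw [hMM, ← h1, h2]
  -- derivative of V
  have hVd : ∀ t, HasDerivAt V (-(γ : ℂ) * ((⁅D t, ρ t⁆)ᴴ * ⁅D t, ρ t⁆).trace) t := by
    intro t
    have hf := trace_deriv (A ^ 2) ρ _ t (hρ' t)
    have hg := trace_deriv A ρ _ t (hρ' t)
    have h := hf.sub (hg.mul hg)
    have hfun : (fun t => (A ^ 2 * ρ t).trace - (A * ρ t).trace * (A * ρ t).trace) = V := by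
      funext s; rw [hV s, pow_two ((A * ρ s).trace)]
    rw [show ((fun t => (A ^ 2 * ρ t).trace) - (fun t => (A * ρ t).trace) * fun t => (A * ρ t).trace) = V from hfun] at h
    refine h.congr_deriv ?_
    have e1 : (A ^ 2 * (-(γ : ℂ) • ⁅⁅D t, ρ t⁆, ρ t⁆)).trace
        = -(γ : ℂ) * (A ^ 2 * ⁅⁅D t, ρ t⁆, ρ t⁆).trace := by
      rw [Matrix.mul_smul, Matrix.trace_smul, smul_eq_mul]
    have e2 : (A * (-(γ : ℂ) • ⁅⁅D t, ρ t⁆, ρ t⁆)).trace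
        = -(γ : ℂ) * (A * ⁅⁅D t, ρ t⁆, ρ t⁆).trace := by
      rw [Matrix.mul_smul, Matrix.trace_smul, smul_eq_mul]
    rw [e1, e2, ← key t]

    ring
  refine ⟨hVd, ?_, ?_⟩
  · intro t
    have htr : (0 : ℂ) ≤ ((⁅D t, ρ t⁆)ᴴ * ⁅D t, ρ t⁆).trace := by
      rw [Matrix.trace]
      apply Finset.sum_nonneg
      intro i _
      rw [Matrix.diag_apply, Matrix.mul_apply]
      apply Finset.sum_nonneg
      intro j _
      rw [Matrix.conjTranspose_apply]
      exact star_mul_self_nonneg _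
    have hγ' : -(γ : ℂ) ≤ 0 := by
      rw [neg_nonpos]
      exact_mod_cast hγ
    exact mul_nonpos_of_nonpos_of_nonneg hγ' htr
  · intro s t hst
    have hW : ∀ x, HasDerivAt (fun u => (V u).re)
        ((-(γ : ℂ) * ((⁅D x, ρ x⁆)ᴴ * ⁅D x, ρ x⁆).trace).re) x := by
      intro x
      exact Complex.reCLM.hasFDerivAt.comp_hasDerivAt x (hVd x)
    have hle : ∀ x, (-(γ : ℂ) * ((⁅D x, ρ x⁆)ᴴ * ⁅D x, ρ x⁆).trace).re ≤ 0 := by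
      intro x
      have htr : (0 : ℂ) ≤ ((⁅D x, ρ x⁆)ᴴ * ⁅D x, ρ x⁆).trace := by
        rw [Matrix.trace]
        apply Finset.sum_nonneg
        intro i _
        rw [Matrix.diag_apply, Matrix.mul_apply]
        apply Finset.sum_nonneg
        intro j _
        rw [Matrix.conjTranspose_apply]
        exact star_mul_self_nonneg _
      have hγ' : -(γ : ℂ) ≤ 0 := by
        rw [neg_nonpos]; exact_mod_cast hγ
      have := mul_nonpos_of_nonpos_of_nonneg hγ' htr
      exact (Complex.le_def.1 this).1
    have hanti : Antitone (fun u => (V u).re) := by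
      apply antitone_of_deriv_nonpos
      · exact fun x => (hW x).differentiableAt
      · intro x
        rw [(hW x).deriv]
        exact hle x
    exact hanti hst
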